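/- For any two measurable sets A, B ⊆ T², the measure of the intersection A ∩ B(n) converges to |A|·|B|/(4π²) as n → ∞. -/

import Mathlib

open MeasureTheory Real Filter Topology

noncomputable section

instance : Fact (0 < 2 * π) := ⟨by positivity⟩

/-- The two-dimensional torus `(ℝ/2πℤ)²`. -/
abbrev T2 := AddCircle (2 * π) × AddCircle (2 * π)

/-- The dilation map `(x,y) ↦ (nx, ny)` on the torus. -/
def dil (n : ℕ) (p : T2) : T2 := (n • p.1, n • p.2)

namespace Mix

local notation "𝕋" => AddCircle (2 * π)

lemma continuous_dil (n : ℕ) : Continuous (dil n) :=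
  (continuous_fst.nsmul n).prodMk (continuous_snd.nsmul n)

lemma measurable_dil (n : ℕ) : Measurable (dil n) := (continuous_dil n).measurable

lemma mp_nsmul {n : ℕ} (hn : 1 ≤ n) :
    MeasurePreserving (fun x : 𝕋 => n • x) volume volume := by
  have h := MeasureTheory.Measure.measurePreserving_zsmul (volume : Measure 𝕋)
      (n := (n : ℤ)) (by exact_mod_cast Nat.one_le_iff_ne_zero.mp hn)
  simpa [natCast_zsmul] using h

lemma mp_dil {n : ℕ} (hn : 1 ≤ n) : MeasurePreserving (dil n) volume volume := by
  have h := (mp_nsmul hn).prod (mp_nsmul hn)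
  rw [← Measure.volume_eq_prod] at h
  exact h

/-- characters on the 2-torus -/
def e (k l : ℤ) : T2 → ℂ := fun p => fourier k p.1 * fourier l p.2

lemma cont_e (k l : ℤ) : Continuous (e k l) :=
  ((fourier k).continuous.comp continuous_fst).mul ((fourier l).continuous.comp continuous_snd)

def S : Set (T2 → ℂ) := {f | ∃ k l : ℤ, f = e k l}

/-- integral of a 1-D character -/
def intF (k : ℤ) : ℂ := ∫ x : 𝕋, fourier k x

lemma intF_eq (k : ℤ) : intF k = if k = 0 then ((2 * π : ℝ) : ℂ) else 0 := by
  rw [intF, AddCircle.volume_eq_smul_haarAddCircle, integral_smul_measure,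
    ENNReal.toReal_ofReal (by positivity : (0:ℝ) ≤ 2 * π)]
  rcases eq_or_ne k 0 with rfl | hk
  · simp only [if_pos rfl]
    have h1 : (fun x : 𝕋 => fourier 0 x) = fun _ => (1 : ℂ) := by
      ext x; exact fourier_zero
    rw [h1, integral_const, probReal_univ]
    simp [Complex.real_smul]
  · rw [if_neg hk]
    have h0 : ∫ x : 𝕋, fourier k x ∂AddCircle.haarAddCircle = 0 :=
      integral_eq_zero_of_add_right_eq_neg
        (fourier_add_half_inv_index hk (by positivity))
    rw [h0, smul_zero]

lemma integral_e (k l : ℤ) : ∫ p : T2, e k l p = intF k * intF l := by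
  show ∫ p : T2, fourier k p.1 * fourier l p.2 = _
  rw [Measure.volume_eq_prod]
  exact integral_prod_mul _ _

lemma fourier_nsmul_apply (m : ℤ) (n : ℕ) (x : 𝕋) :
    fourier m (n • x) = fourier ((n : ℤ) * m) x := by
  rw [fourier_apply, fourier_apply, ← natCast_zsmul x n, smul_smul]
  have h : m * (n : ℤ) = (n : ℤ) * m := mul_comm _ _
  rw [h]

lemma key_integral (k l k' l' : ℤ) (n : ℕ) :
    ∫ p : T2, e k l p * e k' l' (dil n p)
      = intF (k + n * k') * intF (l + n * l') := by
  have h : (fun p : T2 => e k l p * e k' l' (dil n p))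
      = fun p : T2 => fourier (k + (n : ℤ) * k') p.1 * fourier (l + (n : ℤ) * l') p.2 := by
    funext p
    simp only [e, dil]
    rw [fourier_nsmul_apply, fourier_nsmul_apply, fourier_add, fourier_add]
    ring
  rw [h, Measure.volume_eq_prod, integral_prod_mul]
  rfl

def Z : ℂ := ((4 * π ^ 2 : ℝ) : ℂ)

lemma Z_ne : Z ≠ 0 := by
  simp only [Z, ne_eq, Complex.ofReal_eq_zero]
  positivity

lemma integrable_of_continuous {u : T2 → ℂ} (hu : Continuous u) : Integrable u volume :=
  hu.integrable_of_hasCompactSupport (HasCompactSupport.of_compactSpace u)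

lemma aux_ne (k k' : ℤ) (h' : k' ≠ 0) {n : ℕ} (hn : k.natAbs + 1 ≤ n) :
    k + (n : ℤ) * k' ≠ 0 := by
  intro hc
  have h1 : |k| = (n : ℤ) * |k'| := by
    have hk : k = -((n : ℤ) * k') := by linarith
    rw [hk, abs_neg, abs_mul, Nat.abs_cast]
  have h2 : (1 : ℤ) ≤ |k'| := Int.one_le_abs (by simpa using h')
  have h3 : (n : ℤ) ≤ |k| := by nlinarith [h1]
  have h4 : |k| < (n : ℤ) := by
    rw [Int.abs_eq_natAbs]
    exact_mod_cast hn
  linarith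

lemma tendsto_char (k l k' l' : ℤ) :
    Tendsto (fun n : ℕ => ∫ p : T2, e k l p * e k' l' (dil n p)) atTop
      (𝓝 ((∫ p : T2, e k l p) * (∫ p : T2, e k' l' p) / Z)) := by
  by_cases h : k' = 0 ∧ l' = 0
  · obtain ⟨rfl, rfl⟩ := h
    have hval : ∀ n : ℕ, ∫ p : T2, e k l p * e 0 0 (dil n p) = intF k * intF l := by
      intro n; rw [key_integral]; norm_num
    have hlim : (∫ p : T2, e k l p) * (∫ p : T2, e 0 0 p) / Z = intF k * intF l := by
      rw [integral_e, integral_e, intF_eq 0, if_pos rfl]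
      have h4 : ((2 * π : ℝ) : ℂ) * ((2 * π : ℝ) : ℂ) = Z := by
        rw [Z]; push_cast; ring
      rw [h4, mul_div_assoc, div_self Z_ne, mul_one]
    rw [hlim]
    exact Tendsto.congr (fun n => (hval n).symm) tendsto_const_nhds
  · have hq : (∫ p : T2, e k' l' p) = 0 := by
      rw [integral_e, intF_eq, intF_eq]
      rcases not_and_or.mp h with h' | h'
      · rw [if_neg h', zero_mul]
      · rw [if_neg h', mul_zero]
    rw [hq, mul_zero, zero_div]
    have hev : ∀ᶠ n : ℕ in atTop, (0 : ℂ) = ∫ p : T2, e k l p * e k' l' (dil n p) := by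
      filter_upwards [eventually_ge_atTop (max k.natAbs l.natAbs + 1)] with n hn
      rw [key_integral]
      rcases not_and_or.mp h with h' | h'
      · rw [intF_eq (k + n * k'), if_neg (aux_ne k k' h'
          (le_trans (by simp [Nat.succ_le_succ, le_max_left]) hn)), zero_mul]
      · rw [intF_eq (l + n * l'), if_neg (aux_ne l l' h'
          (le_trans (by simp [Nat.succ_le_succ, le_max_right]) hn)), mul_zero]
    exact Tendsto.congr' hev tendsto_const_nhds

lemma cont_of_mem_span {f : T2 → ℂ} (hf : f ∈ Submodule.span ℂ S) : Continuous f := by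
  induction hf using Submodule.span_induction with
  | mem g hg => obtain ⟨k, l, rfl⟩ := hg; exact cont_e k l
  | zero => exact continuous_const
  | add g h _ _ ihg ihh => exact ihg.add ihh
  | smul a g _ ihg => exact ihg.const_smul a

lemma integrable_pair {u v : T2 → ℂ} (hu : Continuous u) (hv : Continuous v) (n : ℕ) :
    Integrable (fun x : T2 => u x * v (dil n x)) volume :=
  integrable_of_continuous (hu.mul (hv.comp (continuous_dil n)))

lemma tendsto_span_char (k' l' : ℤ) {p : T2 → ℂ} (hp : p ∈ Submodule.span ℂ S) :
    Tendsto (fun n : ℕ => ∫ x : T2, p x * e k' l' (dil n x)) atTop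
      (𝓝 ((∫ x : T2, p x) * (∫ x : T2, e k' l' x) / Z)) := by
  induction hp using Submodule.span_induction with
  | mem f hf => obtain ⟨k, l, rfl⟩ := hf; exact tendsto_char k l k' l'
  | zero => simpa using (tendsto_const_nhds :
      Tendsto (fun _ : ℕ => (0 : ℂ)) atTop (𝓝 0))
  | add f g hf hg ihf ihg =>
      have hfc := cont_of_mem_span hf
      have hgc := cont_of_mem_span hg
      have heq : ∀ n : ℕ,
          (∫ x : T2, f x * e k' l' (dil n x)) + (∫ x : T2, g x * e k' l' (dil n x))
            = ∫ x : T2, (f + g) x * e k' l' (dil n x) := by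
        intro n
        rw [← integral_add (integrable_pair hfc (cont_e k' l') n)
          (integrable_pair hgc (cont_e k' l') n)]
        congr 1; funext x; simp only [Pi.add_apply]; ring
      have h2 := (ihf.add ihg).congr heq
      convert h2 using 2
      have : (∫ x : T2, (f + g) x) = (∫ x : T2, f x) + ∫ x : T2, g x := by
        simp only [Pi.add_apply]
        exact integral_add (integrable_of_continuous hfc) (integrable_of_continuous hgc)
      rw [this]; ring
  | smul a f hf ihf =>
      have hfc := cont_of_mem_span hf
      have heq : ∀ n : ℕ,
          a * (∫ x : T2, f x * e k' l' (dil n x)) = ∫ x : T2, (a • f) x * e k' l' (dil n x) := by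
        intro n
        rw [← smul_eq_mul, ← integral_smul]
        congr 1; funext x; simp only [Pi.smul_apply, smul_eq_mul]; ring
      have h2 := (ihf.const_mul a).congr heq
      convert h2 using 2
      have : (∫ x : T2, (a • f) x) = a * ∫ x : T2, f x := by
        simp only [Pi.smul_apply]
        rw [integral_smul, smul_eq_mul]
      rw [this]; ring

lemma tendsto_span {p q : T2 → ℂ} (hp : p ∈ Submodule.span ℂ S)
    (hq : q ∈ Submodule.span ℂ S) :
    Tendsto (fun n : ℕ => ∫ x : T2, p x * q (dil n x)) atTop
      (𝓝 ((∫ x : T2, p x) * (∫ x : T2, q x) / Z)) := by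
  have hpc := cont_of_mem_span hp
  induction hq using Submodule.span_induction with
  | mem g hg => obtain ⟨k, l, rfl⟩ := hg; exact tendsto_span_char k l hp
  | zero => simpa using (tendsto_const_nhds :
      Tendsto (fun _ : ℕ => (0 : ℂ)) atTop (𝓝 0))
  | add f g hf hg ihf ihg =>
      have hfc := cont_of_mem_span hf
      have hgc := cont_of_mem_span hg
      have heq : ∀ n : ℕ,
          (∫ x : T2, p x * f (dil n x)) + (∫ x : T2, p x * g (dil n x))
            = ∫ x : T2, p x * (f + g) (dil n x) := by
        intro n
        rw [← integral_add (integrable_pair hpc hfc n) (integrable_pair hpc hgc n)]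
        congr 1; funext x; simp only [Pi.add_apply]; ring
      have h2 := (ihf.add ihg).congr heq
      convert h2 using 2
      have : (∫ x : T2, (f + g) x) = (∫ x : T2, f x) + ∫ x : T2, g x := by
        simp only [Pi.add_apply]
        exact integral_add (integrable_of_continuous hfc) (integrable_of_continuous hgc)
      rw [this]; ring
  | smul a f hf ihf =>
      have hfc := cont_of_mem_span hf
      have heq : ∀ n : ℕ,
          a * (∫ x : T2, p x * f (dil n x)) = ∫ x : T2, p x * (a • f) (dil n x) := by
        intro n
        rw [← smul_eq_mul, ← integral_smul]
        congr 1; funext x; simp only [Pi.smul_apply, smul_eq_mul]; ring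
      have h2 := (ihf.const_mul a).congr heq
      convert h2 using 2
      have : (∫ x : T2, (a • f) x) = a * ∫ x : T2, f x := by
        simp only [Pi.smul_apply]
        rw [integral_smul, smul_eq_mul]
      rw [this]; ring

/-- characters as bundled continuous maps -/
def eC (k l : ℤ) : C(T2, ℂ) := ⟨e k l, cont_e k l⟩

def R : Set C(T2, ℂ) := {f | ∃ k l : ℤ, f = eC k l}

lemma eC_mul (k l k' l' : ℤ) : eC k l * eC k' l' = eC (k + k') (l + l') := by
  ext p
  simp only [eC, ContinuousMap.mul_apply, ContinuousMap.coe_mk, e]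
  rw [fourier_add, fourier_add]
  ring

lemma eC_one : (1 : C(T2, ℂ)) = eC 0 0 := by
  ext p
  simp only [eC, ContinuousMap.one_apply, ContinuousMap.coe_mk, e]
  rw [fourier_zero, fourier_zero, mul_one]

lemma star_eC (k l : ℤ) : star (eC k l) = eC (-k) (-l) := by
  ext p
  simp only [eC, ContinuousMap.star_apply, ContinuousMap.coe_mk, e, star_mul']
  rw [fourier_neg, fourier_neg, RCLike.star_def]

/-- The star subalgebra generated by the characters. -/
def swAlg : StarSubalgebra ℂ C(T2, ℂ) where
  toSubalgebra := Algebra.adjoin ℂ R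
  star_mem' := by
    show Algebra.adjoin ℂ R ≤ star (Algebra.adjoin ℂ R)
    refine Algebra.adjoin_le ?_
    rintro - ⟨k, l, rfl⟩
    exact Algebra.subset_adjoin ⟨-k, -l, star_eC k l⟩

lemma swAlg_coe :
    Subalgebra.toSubmodule (Algebra.adjoin ℂ R) = Submodule.span ℂ R := by
  apply Algebra.adjoin_eq_span_of_subset
  refine Set.Subset.trans ?_ Submodule.subset_span
  intro x hx
  refine Submonoid.closure_induction (fun _ => id) ⟨0, 0, eC_one⟩ ?_ hx
  rintro - - - - ⟨k, l, rfl⟩ ⟨k', l', rfl⟩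
  exact ⟨k + k', l + l', eC_mul k l k' l'⟩

lemma swAlg_separates : (swAlg).SeparatesPoints := by
  intro x y hxy
  rcases Prod.ext_iff.not.mp hxy |> not_and_or.mp with h1 | h1
  · refine ⟨_, ⟨eC 1 0, Algebra.subset_adjoin ⟨1, 0, rfl⟩, rfl⟩, ?_⟩
    simp only [eC, ContinuousMap.coe_mk, e]
    rw [fourier_zero, fourier_zero, mul_one, mul_one, fourier_one, fourier_one]
    intro hc
    rw [Circle.coe_inj] at hc
    exact h1 (AddCircle.injective_toCircle (by positivity : (0:ℝ) < 2*π).ne' hc)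
  · refine ⟨_, ⟨eC 0 1, Algebra.subset_adjoin ⟨0, 1, rfl⟩, rfl⟩, ?_⟩
    simp only [eC, ContinuousMap.coe_mk, e]
    rw [fourier_zero, fourier_zero, one_mul, one_mul, fourier_one, fourier_one]
    intro hc
    rw [Circle.coe_inj] at hc
    exact h1 (AddCircle.injective_toCircle (by positivity : (0:ℝ) < 2*π).ne' hc)

lemma span_R_closure_eq_top :
    (Submodule.span ℂ R).topologicalClosure = ⊤ := by
  rw [← swAlg_coe]
  have h := ContinuousMap.starSubalgebra_topologicalClosure_eq_top_of_separatesPoints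
    swAlg swAlg_separates
  exact congr_arg (Subalgebra.toSubmodule <| StarSubalgebra.toSubalgebra ·) h

lemma mem_span_funcs {q : C(T2, ℂ)} (hq : q ∈ Submodule.span ℂ R) :
    ⇑q ∈ Submodule.span ℂ S := by
  induction hq using Submodule.span_induction with
  | mem g hg =>
      obtain ⟨k, l, rfl⟩ := hg
      exact Submodule.subset_span ⟨k, l, rfl⟩
  | zero => simpa using Submodule.zero_mem _
  | add g h _ _ ihg ihh =>
      rw [ContinuousMap.coe_add]; exact Submodule.add_mem _ ihg ihh
  | smul a g _ ihg =>
      rw [ContinuousMap.coe_smul]; exact Submodule.smul_mem _ a ihg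

lemma dense_span (φ : C(T2, ℂ)) {ε : ℝ} (hε : 0 < ε) :
    ∃ q : C(T2, ℂ), q ∈ Submodule.span ℂ R ∧ ∀ x, ‖φ x - q x‖ ≤ ε := by
  have h1 : φ ∈ closure ((Submodule.span ℂ R : Submodule ℂ C(T2, ℂ)) : Set C(T2, ℂ)) := by
    rw [← Submodule.topologicalClosure_coe, span_R_closure_eq_top]
    trivial
  obtain ⟨q, hq1, hq2⟩ := Metric.mem_closure_iff.mp h1 ε hε
  refine ⟨q, hq1, fun x => ?_⟩
  calc ‖φ x - q x‖ = dist (φ x) (q x) := (dist_eq_norm _ _).symm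
    _ ≤ dist φ q := ContinuousMap.dist_apply_le_dist x
    _ ≤ ε := hq2.le

lemma vol_univ : volume (Set.univ : Set T2) = ENNReal.ofReal (4 * π ^ 2) := by
  rw [Measure.volume_eq_prod, ← Set.univ_prod_univ, Measure.prod_prod,
    AddCircle.measure_univ,
    ← ENNReal.ofReal_mul (by positivity : (0:ℝ) ≤ 2 * π)]
  congr 1
  ring

lemma vol_univ_toReal : (volume (Set.univ : Set T2)).toReal = 4 * π ^ 2 := by
  rw [vol_univ, ENNReal.toReal_ofReal (by positivity)]

lemma approx {f : T2 → ℂ} (hf : Integrable f volume) {ε : ℝ} (hε : 0 < ε) :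
    ∃ p : T2 → ℂ, p ∈ Submodule.span ℂ S ∧ Continuous p ∧ (∫ x : T2, ‖f x - p x‖) ≤ ε := by
  obtain ⟨φ, hφ1, hφ2⟩ := hf.exists_boundedContinuous_integral_sub_le
    (half_pos hε)
  set V : ℝ := (volume (Set.univ : Set T2)).toReal with hV
  have hV0 : 0 ≤ V := ENNReal.toReal_nonneg
  set δ : ℝ := (ε / 2) / (V + 1) with hδdef
  have hδ : 0 < δ := by positivity
  obtain ⟨q, hq1, hq2⟩ := dense_span φ.toContinuousMap hδ
  refine ⟨⇑q, mem_span_funcs hq1, q.continuous, ?_⟩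
  have i0 : Integrable (fun x : T2 => f x - q x) volume :=
    hf.sub (integrable_of_continuous q.continuous)
  have i1 : Integrable (fun x : T2 => ‖f x - φ x‖) volume := (hf.sub hφ2).norm
  have i2 : Integrable (fun x : T2 => ‖φ x - q x‖) volume :=
    (integrable_of_continuous (φ.continuous.sub q.continuous)).norm
  have step1 : (∫ x : T2, ‖f x - q x‖) ≤ ε / 2 + δ * V := by
    calc (∫ x : T2, ‖f x - q x‖)
        ≤ ∫ x : T2, (‖f x - φ x‖ + ‖φ x - q x‖) := by
          refine integral_mono i0.norm (i1.add i2) fun x => ?_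
          calc ‖f x - q x‖ = dist (f x) (q x) := (dist_eq_norm _ _).symm
            _ ≤ dist (f x) (φ x) + dist (φ x) (q x) := dist_triangle _ _ _
            _ = ‖f x - φ x‖ + ‖φ x - q x‖ := by rw [dist_eq_norm, dist_eq_norm]
      _ = (∫ x : T2, ‖f x - φ x‖) + ∫ x : T2, ‖φ x - q x‖ := integral_add i1 i2
      _ ≤ ε / 2 + δ * V := by
          refine add_le_add hφ1 ?_
          calc (∫ x : T2, ‖φ x - q x‖) ≤ ∫ _x : T2, δ :=
                integral_mono i2 (integrable_const δ) fun x => hq2 x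
            _ = δ * V := by rw [integral_const, smul_eq_mul, mul_comm]; rfl
  have step2 : δ * V ≤ ε / 2 := by
    rw [hδdef]
    rw [div_mul_eq_mul_div, div_le_iff₀ (by positivity : (0:ℝ) < V + 1)]
    nlinarith
  linarith

lemma integral_comp_dil {n : ℕ} (hn : 1 ≤ n) (u : T2 → ℝ)
    (hu : AEStronglyMeasurable u volume) :
    ∫ x : T2, u (dil n x) = ∫ x : T2, u x := by
  conv_rhs => rw [← (mp_dil hn).map_eq]
  rw [integral_map (measurable_dil n).aemeasurable
    (by rwa [(mp_dil hn).map_eq])]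

lemma norm_Z : ‖Z‖ = 4 * π ^ 2 := by
  rw [Z, Complex.norm_real, Real.norm_eq_abs, abs_of_pos (by positivity)]

theorem main (A B : Set T2) (hA : MeasurableSet A) (hB : MeasurableSet B) :
    Tendsto (fun n : ℕ => (volume (A ∩ dil n ⁻¹' B)).toReal) atTop
      (𝓝 ((volume A).toReal * (volume B).toReal / (4 * π ^ 2))) := by
  set f : T2 → ℂ := A.indicator (fun _ => (1 : ℂ)) with hfdef
  set g : T2 → ℂ := B.indicator (fun _ => (1 : ℂ)) with hgdef
  have hf : Integrable f volume := (integrable_const (1 : ℂ)).indicator hA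
  have hgint : Integrable g volume := (integrable_const (1 : ℂ)).indicator hB
  have hgm : Measurable g := measurable_const.indicator hB
  have hgb : ∀ x, ‖g x‖ ≤ 1 := by
    intro x
    rw [hgdef]
    by_cases hx : x ∈ B <;> simp [Set.indicator_apply, hx]
  set c : ℝ := (volume A).toReal * (volume B).toReal / (4 * π ^ 2) with hcdef
  have hJ : ∀ n : ℕ, (∫ x : T2, f x * g (dil n x))
      = (((volume (A ∩ dil n ⁻¹' B)).toReal : ℝ) : ℂ) := by
    intro n
    have heq : (fun x : T2 => f x * g (dil n x))
        = (A ∩ dil n ⁻¹' B).indicator (fun _ => (1 : ℂ)) := by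
      funext x
      by_cases hx1 : x ∈ A <;> by_cases hx2 : dil n x ∈ B <;>
        simp [hfdef, hgdef, Set.indicator_apply, hx1, hx2]
    rw [heq, integral_indicator_const _ (hA.inter ((measurable_dil n) hB))]
    simp [Complex.real_smul]; rfl
  have hIf : (∫ x : T2, f x) = (((volume A).toReal : ℝ) : ℂ) := by
    rw [hfdef, integral_indicator_const _ hA]
    simp [Complex.real_smul]; rfl
  have hIg : (∫ x : T2, g x) = (((volume B).toReal : ℝ) : ℂ) := by
    rw [hgdef, integral_indicator_const _ hB]
    simp [Complex.real_smul]; rfl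
  have hc : ((c : ℝ) : ℂ) = (∫ x : T2, f x) * (∫ x : T2, g x) / Z := by
    rw [hIf, hIg, hcdef, Z]
    push_cast
    ring
  -- the complex-valued convergence
  have HC : Tendsto (fun n : ℕ => ∫ x : T2, f x * g (dil n x)) atTop (𝓝 ((c : ℝ) : ℂ)) := by
    rw [Metric.tendsto_atTop]
    intro ε hε
    obtain ⟨p, hpS, hpc, hfp⟩ := approx hf (show (0:ℝ) < ε/8 by positivity)
    set pb := BoundedContinuousFunction.mkOfCompact (⟨p, hpc⟩ : C(T2, ℂ)) with hpbdef
    set Cb : ℝ := ‖pb‖ + 1 with hCbdef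
    have hCb : 0 < Cb := by
      have := norm_nonneg pb
      rw [hCbdef]; linarith
    have hpb : ∀ x, ‖p x‖ ≤ Cb := by
      intro x
      have h1 := BoundedContinuousFunction.norm_coe_le_norm pb x
      have h2 : pb x = p x := rfl
      rw [h2] at h1
      rw [hCbdef]; linarith
    obtain ⟨q, hqS, hqc, hgq⟩ := approx hgint (show (0:ℝ) < ε/(8*Cb) by positivity)
    obtain ⟨N0, hN0⟩ := Metric.tendsto_atTop.mp (tendsto_span hpS hqS) (ε/2) (by positivity)
    refine ⟨max N0 1, fun n hn => ?_⟩
    have hn1 : 1 ≤ n := le_trans (le_max_right _ _) hn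
    have hnN : N0 ≤ n := le_trans (le_max_left _ _) hn
    have hp_int : Integrable p volume := integrable_of_continuous hpc
    have hq_int : Integrable q volume := integrable_of_continuous hqc
    -- integrability facts
    have hgdil_meas : AEStronglyMeasurable (fun x : T2 => g (dil n x)) volume :=
      (hgm.comp (measurable_dil n)).aestronglyMeasurable
    have I0a : Integrable (fun x : T2 => f x * g (dil n x)) volume := by
      have := Integrable.bdd_mul (μ := volume) hf hgdil_meas (ae_of_all _ fun x => hgb (dil n x))
      simpa [mul_comm] using this
    have I0b : Integrable (fun x : T2 => p x * q (dil n x)) volume :=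
      integrable_of_continuous (hpc.mul (hqc.comp (continuous_dil n)))
    have I1 : Integrable (fun x : T2 => (f x - p x) * g (dil n x)) volume := by
      have := Integrable.bdd_mul (μ := volume) (hf.sub hp_int) hgdil_meas
        (ae_of_all _ fun x => hgb (dil n x))
      simpa [mul_comm] using this
    have Igq : Integrable ((fun y : T2 => g y - q y) ∘ dil n) volume :=
      ((mp_dil hn1).integrable_comp (hgint.sub hq_int).aestronglyMeasurable).mpr
        (hgint.sub hq_int)
    have I2 : Integrable (fun x : T2 => p x * (g (dil n x) - q (dil n x))) volume := by
      have := Integrable.bdd_mul (μ := volume) Igq hpc.aestronglyMeasurable (ae_of_all _ hpb)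
      simpa [Function.comp] using this
    -- (a) first difference
    have est1 : ‖(∫ x : T2, f x * g (dil n x)) - ∫ x : T2, p x * q (dil n x)‖ ≤ ε/4 := by
      have hsplit : (∫ x : T2, f x * g (dil n x)) - (∫ x : T2, p x * q (dil n x))
          = (∫ x : T2, (f x - p x) * g (dil n x))
            + ∫ x : T2, p x * (g (dil n x) - q (dil n x)) := by
        rw [← integral_sub I0a I0b, ← integral_add I1 I2]
        congr 1; funext x; ring
      rw [hsplit]
      have e1 : ‖∫ x : T2, (f x - p x) * g (dil n x)‖ ≤ ε/8 := by
        calc ‖∫ x : T2, (f x - p x) * g (dil n x)‖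
            ≤ ∫ x : T2, ‖(f x - p x) * g (dil n x)‖ := norm_integral_le_integral_norm _
          _ ≤ ∫ x : T2, ‖f x - p x‖ := by
              refine integral_mono I1.norm (hf.sub hp_int).norm fun x => ?_
              rw [norm_mul]
              exact mul_le_of_le_one_right (norm_nonneg _) (hgb (dil n x))
          _ ≤ ε/8 := hfp
      have e2 : ‖∫ x : T2, p x * (g (dil n x) - q (dil n x))‖ ≤ ε/8 := by
        have hnormint : Integrable (fun x : T2 => ‖g (dil n x) - q (dil n x)‖) volume := by
          have := Igq.norm
          simpa [Function.comp] using this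
        calc ‖∫ x : T2, p x * (g (dil n x) - q (dil n x))‖
            ≤ ∫ x : T2, ‖p x * (g (dil n x) - q (dil n x))‖ := norm_integral_le_integral_norm _
          _ ≤ ∫ x : T2, Cb * ‖g (dil n x) - q (dil n x)‖ := by
              refine integral_mono I2.norm (hnormint.const_mul Cb) fun x => ?_
              rw [norm_mul]
              exact mul_le_mul_of_nonneg_right (hpb x) (norm_nonneg _)
          _ = Cb * ∫ x : T2, ‖g (dil n x) - q (dil n x)‖ := integral_const_mul _ _
          _ = Cb * ∫ x : T2, ‖g x - q x‖ := by
              rw [integral_comp_dil hn1 (fun y => ‖g y - q y‖)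
                (hgint.sub hq_int).aestronglyMeasurable.norm]
          _ ≤ Cb * (ε/(8*Cb)) := mul_le_mul_of_nonneg_left hgq hCb.le
          _ = ε/8 := by field_simp
      calc ‖(∫ x : T2, (f x - p x) * g (dil n x))
            + ∫ x : T2, p x * (g (dil n x) - q (dil n x))‖
          ≤ ‖∫ x : T2, (f x - p x) * g (dil n x)‖
            + ‖∫ x : T2, p x * (g (dil n x) - q (dil n x))‖ := norm_add_le _ _
        _ ≤ ε/8 + ε/8 := add_le_add e1 e2
        _ = ε/4 := by ring
    -- (b) limit difference
    have est2 : ‖((c : ℝ) : ℂ) - (∫ x : T2, p x) * (∫ x : T2, q x) / Z‖ ≤ ε/4 := by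
      set V : ℝ := 4 * π ^ 2 with hVdef
      have hV : 0 < V := by positivity
      have hVol : (volume (Set.univ : Set T2)).toReal = V := vol_univ_toReal
      have bIf : ‖(∫ x : T2, f x) - ∫ x : T2, p x‖ ≤ ε/8 := by
        rw [← integral_sub hf hp_int]
        exact le_trans (norm_integral_le_integral_norm _) hfp
      have bIg : ‖(∫ x : T2, g x) - ∫ x : T2, q x‖ ≤ ε/(8*Cb) := by
        rw [← integral_sub hgint hq_int]
        exact le_trans (norm_integral_le_integral_norm _) hgq
      have bg : ‖∫ x : T2, g x‖ ≤ V := by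
        calc ‖∫ x : T2, g x‖ ≤ ∫ x : T2, ‖g x‖ := norm_integral_le_integral_norm _
          _ ≤ ∫ _x : T2, (1:ℝ) := integral_mono hgint.norm (integrable_const 1) hgb
          _ = V := by rw [integral_const, smul_eq_mul, mul_one, Measure.real, hVol]
      have bp : ‖∫ x : T2, p x‖ ≤ Cb * V := by
        calc ‖∫ x : T2, p x‖ ≤ ∫ x : T2, ‖p x‖ := norm_integral_le_integral_norm _
          _ ≤ ∫ _x : T2, Cb := integral_mono hp_int.norm (integrable_const Cb) hpb
          _ = Cb * V := by rw [integral_const, smul_eq_mul, mul_comm, Measure.real, hVol]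
      have hnum : ‖(∫ x : T2, f x) * (∫ x : T2, g x)
          - (∫ x : T2, p x) * (∫ x : T2, q x)‖ ≤ ε/4 * V := by
        have hdecomp : (∫ x : T2, f x) * (∫ x : T2, g x)
            - (∫ x : T2, p x) * (∫ x : T2, q x)
            = ((∫ x : T2, f x) - ∫ x : T2, p x) * (∫ x : T2, g x)
              + (∫ x : T2, p x) * ((∫ x : T2, g x) - ∫ x : T2, q x) := by ring
        rw [hdecomp]
        calc ‖((∫ x : T2, f x) - ∫ x : T2, p x) * (∫ x : T2, g x)
              + (∫ x : T2, p x) * ((∫ x : T2, g x) - ∫ x : T2, q x)‖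
            ≤ ‖((∫ x : T2, f x) - ∫ x : T2, p x) * (∫ x : T2, g x)‖
              + ‖(∫ x : T2, p x) * ((∫ x : T2, g x) - ∫ x : T2, q x)‖ := norm_add_le _ _
          _ ≤ (ε/8) * V + (Cb * V) * (ε/(8*Cb)) := by
              refine add_le_add ?_ ?_
              · rw [norm_mul]
                exact mul_le_mul bIf bg (norm_nonneg _) (by positivity)
              · rw [norm_mul]
                exact mul_le_mul bp bIg (norm_nonneg _) (by positivity)
          _ = ε/4 * V := by field_simp; ring
      rw [hc, div_sub_div_same, norm_div, norm_Z, ← hVdef, div_le_iff₀ hV]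
      exact hnum
    -- combine
    have hfinal := hN0 n hnN
    have d1 : dist (∫ x : T2, f x * g (dil n x)) (∫ x : T2, p x * q (dil n x)) ≤ ε/4 := by
      rw [dist_eq_norm]; exact est1
    have d3 : dist ((∫ x : T2, p x) * (∫ x : T2, q x) / Z) (((c : ℝ) : ℂ)) ≤ ε/4 := by
      rw [dist_comm, dist_eq_norm]; exact est2
    have h4 := dist_triangle4 (∫ x : T2, f x * g (dil n x)) (∫ x : T2, p x * q (dil n x))
      ((∫ x : T2, p x) * (∫ x : T2, q x) / Z) (((c : ℝ) : ℂ))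
    linarith
  -- conclude the real statement
  have H2 : Tendsto (fun n : ℕ => (∫ x : T2, f x * g (dil n x)).re) atTop (𝓝 c) := by
    have h3 := (Complex.continuous_re.tendsto (((c : ℝ) : ℂ))).comp HC
    simp only [Complex.ofReal_re] at h3
    exact h3
  refine H2.congr fun n => ?_
  rw [hJ n, Complex.ofReal_re]

end Mix

/-- `|A ∩ B(n)| → |A|·|B|/(4π²)` as `n → ∞`. -/
theorem stmt1 (A B : Set T2) (hA : MeasurableSet A) (hB : MeasurableSet B) :
    Tendsto (fun n : ℕ => (volume (A ∩ dil n ⁻¹' B)).toReal) atTop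
      (nhds ((volume A).toReal * (volume B).toReal / (4 * π ^ 2))) := by
  exact Mix.main A B hA hB
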